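/- arXiv:2203.00563 — 4 statements merged into one kernel-verified Lean document; each statement's English description precedes it below -/
import Mathlib

section
/- Let H_σ, H_π be Hilbert spaces, V : H_π → H_σ a bounded operator with V V* = 1, P ∈ B(H_σ) an orthogonal projection of finite rank, and Q := V* P V. Then Q is an orthogonal projection of finite rank on H_π, and for any a ∈ B(H_π), b ∈ B(H_σ), ‖Q a − Q a Q‖ ≤ ‖P b − P b P‖ + 2‖b V − V a‖. -/
open Filter Topology

/-- A finite rank orthogonal projection on a Hilbert space. -/
def IsFinRankProj {H : Type*} [NormedAddCommGroup H] [InnerProductSpace ℂ H]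
    [CompleteSpace H] (P : H →L[ℂ] H) : Prop :=
  IsSelfAdjoint P ∧ P ∘L P = P ∧ FiniteDimensional ℂ (LinearMap.range (P : H →ₗ[ℂ] H))

open ContinuousLinearMap in
lemma proj_norm_le_one {H : Type*} [NormedAddCommGroup H] [InnerProductSpace ℂ H]
    [CompleteSpace H] (P : H →L[ℂ] H) (hsa : IsSelfAdjoint P) (hidem : P ∘L P = P) :
    ‖P‖ ≤ 1 := by
  refine opNorm_le_bound _ zero_le_one fun x => ?_
  rw [one_mul]
  have h1 : ‖P x‖ ^ 2 = RCLike.re (inner ℂ (P x) (P x) : ℂ) := by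
    rw [inner_self_eq_norm_sq]
  have hadj : ContinuousLinearMap.adjoint P = P := by
    rw [← star_eq_adjoint]; exact hsa
  have h2 : (inner ℂ (P x) (P x) : ℂ) = inner ℂ (P x) x := by
    calc (inner ℂ (P x) (P x) : ℂ) = inner ℂ (ContinuousLinearMap.adjoint P (P x)) x := by
          rw [adjoint_inner_left]
      _ = inner ℂ (P (P x)) x := by rw [hadj]
      _ = inner ℂ (P x) x := by
          have : P (P x) = P x := by
            have := congrArg (fun T => T x) hidem
            simpa using this
          rw [this]
  have h3 : ‖P x‖ ^ 2 ≤ ‖P x‖ * ‖x‖ := by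
    rw [h1, h2]
    calc RCLike.re (inner ℂ (P x) x : ℂ) ≤ ‖(inner ℂ (P x) x : ℂ)‖ := RCLike.re_le_norm _
      _ ≤ ‖P x‖ * ‖x‖ := norm_inner_le_norm _ _
  by_cases h : ‖P x‖ = 0
  · rw [h]; exact norm_nonneg x
  · have hpos : 0 < ‖P x‖ := lt_of_le_of_ne (norm_nonneg _) (Ne.symm h)
    nlinarith

theorem stmt3 {Hπ Hσ : Type*}
    [NormedAddCommGroup Hπ] [InnerProductSpace ℂ Hπ] [CompleteSpace Hπ]
    [NormedAddCommGroup Hσ] [InnerProductSpace ℂ Hσ] [CompleteSpace Hσ]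
    (V : Hπ →L[ℂ] Hσ) (hV : V ∘L ContinuousLinearMap.adjoint V = 1)
    (P : Hσ →L[ℂ] Hσ) (hP : IsFinRankProj P)
    (Q : Hπ →L[ℂ] Hπ) (hQ : Q = ContinuousLinearMap.adjoint V ∘L P ∘L V) :
    IsFinRankProj Q ∧
      ∀ (a : Hπ →L[ℂ] Hπ) (b : Hσ →L[ℂ] Hσ),
        ‖Q ∘L a - Q ∘L a ∘L Q‖ ≤ ‖P ∘L b - P ∘L b ∘L P‖ + 2 * ‖b ∘L V - V ∘L a‖ := by
  obtain ⟨hPsa, hPidem, hPfin⟩ := hP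
  set V' := ContinuousLinearMap.adjoint V with hV'
  have hadjP : ContinuousLinearMap.adjoint P = P := by
    rw [← ContinuousLinearMap.star_eq_adjoint]; exact hPsa
  have hVapp : ∀ y, V (V' y) = y := by
    intro y
    have := congrArg (fun T => T y) hV
    simpa using this
  have hPapp : ∀ y, P (P y) = P y := by
    intro y
    have := congrArg (fun T => T y) hPidem
    simpa using this
  -- norms ≤ 1
  have hnP : ‖P‖ ≤ 1 := proj_norm_le_one P hPsa hPidem
  have hnV' : ‖V'‖ ≤ 1 := by
    refine ContinuousLinearMap.opNorm_le_bound _ zero_le_one fun x => ?_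
    rw [one_mul]
    have h1 : ‖V' x‖ ^ 2 = RCLike.re (inner ℂ (V' x) (V' x) : ℂ) := by
      rw [inner_self_eq_norm_sq]
    have h2 : (inner ℂ (V' x) (V' x) : ℂ) = inner ℂ x x := by
      calc (inner ℂ (V' x) (V' x) : ℂ) = inner ℂ x (V (V' x)) := by
            rw [hV']; exact ContinuousLinearMap.adjoint_inner_left V _ _
        _ = inner ℂ x x := by rw [hVapp]
    have hsq : ‖V' x‖ ^ 2 = ‖x‖ ^ 2 := by
      rw [h1, h2, inner_self_eq_norm_sq]
    nlinarith [norm_nonneg (V' x), norm_nonneg x]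
  have hnV : ‖V‖ ≤ 1 := by
    have : ‖V'‖ = ‖V‖ := by
      rw [hV']
      exact (ContinuousLinearMap.adjoint : (Hπ →L[ℂ] Hσ) ≃ₗᵢ⋆[ℂ] (Hσ →L[ℂ] Hπ)).norm_map V
    linarith
  constructor
  · refine ⟨?_, ?_, ?_⟩
    · -- self-adjoint
      rw [IsSelfAdjoint, ContinuousLinearMap.star_eq_adjoint, hQ,
        ContinuousLinearMap.adjoint_comp, ContinuousLinearMap.adjoint_comp, hadjP,
        ContinuousLinearMap.adjoint_adjoint]
      rfl
    · -- idempotent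
      rw [hQ]
      ext x
      simp [ContinuousLinearMap.comp_apply, hVapp, hPapp]
    · -- finite rank
      have hcoe : (Q : Hπ →ₗ[ℂ] Hπ) =
          (V' : Hσ →ₗ[ℂ] Hπ).comp (((P : Hσ →ₗ[ℂ] Hσ)).comp (V : Hπ →ₗ[ℂ] Hσ)) := by
        rw [hQ]; rfl
      rw [hcoe, LinearMap.range_comp]
      have hle : LinearMap.range ((P : Hσ →ₗ[ℂ] Hσ).comp (V : Hπ →ₗ[ℂ] Hσ)) ≤
          LinearMap.range (P : Hσ →ₗ[ℂ] Hσ) := by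
        rintro _ ⟨y, rfl⟩
        exact ⟨V y, rfl⟩
      have : FiniteDimensional ℂ
          (LinearMap.range ((P : Hσ →ₗ[ℂ] Hσ).comp (V : Hπ →ₗ[ℂ] Hσ))) :=
        Submodule.finiteDimensional_of_le hle
      exact Module.Finite.map _ _
  · intro a b
    set F : Hπ →L[ℂ] Hσ := V ∘L a - b ∘L V with hF
    have key : Q ∘L a - Q ∘L a ∘L Q =
        (V' ∘L (P ∘L b - P ∘L b ∘L P) ∘L V + V' ∘L (P ∘L F)) -
          (V' ∘L (P ∘L F)) ∘L (V' ∘L (P ∘L V)) := by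
      ext x
      simp only [hQ, hF, ContinuousLinearMap.comp_apply, ContinuousLinearMap.sub_apply,
        ContinuousLinearMap.add_apply, map_sub, hVapp]
      abel
    rw [key]
    have hF' : ‖F‖ = ‖b ∘L V - V ∘L a‖ := by
      rw [hF, ← norm_neg, neg_sub]
    have t1 : ‖V' ∘L (P ∘L b - P ∘L b ∘L P) ∘L V‖ ≤ ‖P ∘L b - P ∘L b ∘L P‖ := by
      calc ‖V' ∘L (P ∘L b - P ∘L b ∘L P) ∘L V‖
          ≤ ‖V'‖ * ‖(P ∘L b - P ∘L b ∘L P) ∘L V‖ := ContinuousLinearMap.opNorm_comp_le _ _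
        _ ≤ ‖V'‖ * (‖P ∘L b - P ∘L b ∘L P‖ * ‖V‖) := by
            gcongr; exact ContinuousLinearMap.opNorm_comp_le _ _
        _ ≤ 1 * (‖P ∘L b - P ∘L b ∘L P‖ * 1) := by gcongr
        _ = ‖P ∘L b - P ∘L b ∘L P‖ := by ring
    have t2 : ‖V' ∘L (P ∘L F)‖ ≤ ‖F‖ := by
      calc ‖V' ∘L (P ∘L F)‖ ≤ ‖V'‖ * ‖P ∘L F‖ := ContinuousLinearMap.opNorm_comp_le _ _
        _ ≤ ‖V'‖ * (‖P‖ * ‖F‖) := by gcongr; exact ContinuousLinearMap.opNorm_comp_le _ _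
        _ ≤ 1 * (1 * ‖F‖) := by gcongr
        _ = ‖F‖ := by ring
    have t3 : ‖V' ∘L (P ∘L V)‖ ≤ 1 := by
      calc ‖V' ∘L (P ∘L V)‖ ≤ ‖V'‖ * ‖P ∘L V‖ := ContinuousLinearMap.opNorm_comp_le _ _
        _ ≤ ‖V'‖ * (‖P‖ * ‖V‖) := by gcongr; exact ContinuousLinearMap.opNorm_comp_le _ _
        _ ≤ 1 * (1 * 1) := by gcongr
        _ = 1 := by ring
    have t4 : ‖(V' ∘L (P ∘L F)) ∘L (V' ∘L (P ∘L V))‖ ≤ ‖F‖ := by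
      calc ‖(V' ∘L (P ∘L F)) ∘L (V' ∘L (P ∘L V))‖
          ≤ ‖V' ∘L (P ∘L F)‖ * ‖V' ∘L (P ∘L V)‖ := ContinuousLinearMap.opNorm_comp_le _ _
        _ ≤ ‖F‖ * 1 := mul_le_mul t2 t3 (norm_nonneg _) (norm_nonneg _)
        _ = ‖F‖ := mul_one _
    calc ‖(V' ∘L (P ∘L b - P ∘L b ∘L P) ∘L V + V' ∘L (P ∘L F)) -
          (V' ∘L (P ∘L F)) ∘L (V' ∘L (P ∘L V))‖
        ≤ ‖V' ∘L (P ∘L b - P ∘L b ∘L P) ∘L V + V' ∘L (P ∘L F)‖ +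
          ‖(V' ∘L (P ∘L F)) ∘L (V' ∘L (P ∘L V))‖ := norm_sub_le _ _
      _ ≤ (‖V' ∘L (P ∘L b - P ∘L b ∘L P) ∘L V‖ + ‖V' ∘L (P ∘L F)‖) +
          ‖(V' ∘L (P ∘L F)) ∘L (V' ∘L (P ∘L V))‖ := by gcongr; exact norm_add_le _ _
      _ ≤ (‖P ∘L b - P ∘L b ∘L P‖ + ‖F‖) + ‖F‖ := by gcongr
      _ = ‖P ∘L b - P ∘L b ∘L P‖ + 2 * ‖b ∘L V - V ∘L a‖ := by rw [hF']; ring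
end

section
/- Let H be a separable infinite dimensional Hilbert space and (P_n) an increasing sequence of finite rank orthogonal projections converging strongly to 1. Then for every T ∈ B(H), the distance of T to the compact operators satisfies dist(T, K(H)) = lim_n ‖(1 − P_n) T (1 − P_n)‖. -/
open Filter Topology

lemma aux_fr_compact {H : Type*} [NormedAddCommGroup H] [InnerProductSpace ℂ H]
    (f : H →L[ℂ] H) (hf : FiniteDimensional ℂ (LinearMap.range (f : H →ₗ[ℂ] H))) :
    IsCompactOperator ⇑f := by
  set V := LinearMap.range (f : H →ₗ[ℂ] H) with hV
  have : ProperSpace V := FiniteDimensional.proper ℂ V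
  let g : H →L[ℂ] V := f.codRestrict V (fun x => LinearMap.mem_range_self _ x)
  refine ⟨V.subtypeL '' Metric.closedBall 0 ‖g‖,
    (isCompact_closedBall _ _).image V.subtypeL.continuous, ?_⟩
  refine Filter.mem_of_superset (Metric.closedBall_mem_nhds 0 one_pos) ?_
  intro x hx
  refine ⟨g x, ?_, rfl⟩
  simp only [Metric.mem_closedBall, dist_zero_right]
  calc ‖g x‖ ≤ ‖g‖ * ‖x‖ := g.le_opNorm x
    _ ≤ ‖g‖ * 1 := by
        have := Metric.mem_closedBall.mp hx
        rw [dist_zero_right] at this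
        exact mul_le_mul_of_nonneg_left this (norm_nonneg g)
    _ = ‖g‖ := mul_one _

lemma aux_sa_idem_contr {H : Type*} [NormedAddCommGroup H] [InnerProductSpace ℂ H]
    [CompleteSpace H] (Q : H →L[ℂ] H) (hsa : IsSelfAdjoint Q) (hQ : Q ∘L Q = Q) (x : H) :
    ‖Q x‖ ≤ ‖x‖ := by
  by_cases h : Q x = 0
  · simp [h]
  have hsym := ContinuousLinearMap.isSelfAdjoint_iff_isSymmetric.mp hsa
  have h1 : (‖Q x‖ : ℝ) ^ 2 = RCLike.re (inner ℂ (Q x) (Q x) : ℂ) := by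
    rw [inner_self_eq_norm_sq]
  have hQQ : Q (Q x) = Q x := by
    conv_rhs => rw [← hQ]
    rfl
  have h2 : (inner ℂ (Q x) (Q x) : ℂ) = inner ℂ x (Q x) := by
    have h3 := hsym x (Q x)
    rw [show (Q : H →ₗ[ℂ] H) (Q x) = Q (Q x) from rfl, hQQ] at h3
    exact h3
  have h4 : RCLike.re (inner ℂ x (Q x) : ℂ) ≤ ‖x‖ * ‖Q x‖ := by
    calc RCLike.re (inner ℂ x (Q x) : ℂ) ≤ ‖(inner ℂ x (Q x) : ℂ)‖ := RCLike.re_le_norm _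
      _ ≤ ‖x‖ * ‖Q x‖ := norm_inner_le_norm _ _
  have hpos : 0 < ‖Q x‖ := norm_pos_iff.mpr h
  nlinarith [h1, h2 ▸ h1]

theorem stmt5 {H : Type*} [NormedAddCommGroup H] [InnerProductSpace ℂ H] [CompleteSpace H]
    [TopologicalSpace.SeparableSpace H] (hinf : ¬ FiniteDimensional ℂ H)
    (P : ℕ → H →L[ℂ] H) (hproj : ∀ n, IsFinRankProj (P n))
    (hmono : ∀ n, P (n + 1) ∘L P n = P n)
    (hsot : ∀ x : H, Tendsto (fun n => P n x) atTop (𝓝 x))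
    (T : H →L[ℂ] H) :
    Tendsto (fun n => ‖(1 - P n) ∘L T ∘L (1 - P n)‖) atTop
      (𝓝 (Metric.infDist T {S : H →L[ℂ] H | IsCompactOperator ⇑S})) := by
  classical
  set S : Set (H →L[ℂ] H) := {S | IsCompactOperator ⇑S} with hSdef
  have hSne : S.Nonempty := ⟨0, by
    show IsCompactOperator ⇑(0 : H →L[ℂ] H)
    simpa using (isCompactOperator_zero : IsCompactOperator (0 : H → H))⟩
  set d := Metric.infDist T S with hd
  -- basic facts about Q n = 1 - P n
  have hQidem : ∀ n, (1 - P n) ∘L (1 - P n) = 1 - P n := by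
    intro n
    have hm : P n * P n = P n := (hproj n).2.1
    show (1 - P n) * (1 - P n) = 1 - P n
    calc (1 - P n) * (1 - P n) = 1 - P n - P n + P n * P n := by noncomm_ring
      _ = 1 - P n := by rw [hm]; abel
  have hQsa : ∀ n, IsSelfAdjoint (1 - P n) :=
    fun n => (IsSelfAdjoint.one (H →L[ℂ] H)).sub (hproj n).1
  have hQcontr : ∀ n (x : H), ‖(1 - P n) x‖ ≤ ‖x‖ :=
    fun n x => aux_sa_idem_contr _ (hQsa n) (hQidem n) x
  have hQnorm : ∀ n, ‖(1 : H →L[ℂ] H) - P n‖ ≤ 1 := fun n =>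
    ContinuousLinearMap.opNorm_le_bound _ zero_le_one (fun x => by
      simpa using hQcontr n x)
  -- lower bound
  have hlow : ∀ n, d ≤ ‖(1 - P n) ∘L T ∘L (1 - P n)‖ := by
    intro n
    set A := (1 - P n) ∘L T ∘L (1 - P n) with hA
    have hPc : IsCompactOperator ⇑(P n) := aux_fr_compact _ (hproj n).2.2
    have hTA : T - A = (P n) ∘L T + (1 - P n) ∘L (T ∘L P n) := by
      ext x
      simp only [hA, ContinuousLinearMap.coe_comp', Function.comp_apply,
        ContinuousLinearMap.sub_apply, ContinuousLinearMap.add_apply,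
        ContinuousLinearMap.one_apply, map_sub]
      abel
    have hKc : IsCompactOperator ⇑(T - A) := by
      rw [hTA]
      have h1 : IsCompactOperator ⇑((P n) ∘L T) := by
        simpa [ContinuousLinearMap.coe_comp'] using hPc.comp_clm T
      have h2 : IsCompactOperator ⇑((1 - P n) ∘L (T ∘L P n)) := by
        have := ((hPc.clm_comp T).clm_comp (1 - P n))
        exact this
      have := h1.add h2
      simpa [ContinuousLinearMap.coe_add'] using this
    have hmem : (T - A) ∈ S := hKc
    have := Metric.infDist_le_dist_of_mem (x := T) hmem
    rw [dist_eq_norm, sub_sub_cancel] at this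
    exact this
  -- main convergence
  rw [Metric.tendsto_atTop]
  intro ε hε
  obtain ⟨K, hKmem, hKdist⟩ := (Metric.infDist_lt_iff hSne).mp
    (show d < d + ε / 3 by linarith)
  have hKc : IsCompactOperator ⇑K := hKmem
  have hCcomp : IsCompact (closure (⇑K '' Metric.closedBall 0 1)) :=
    hKc.isCompact_closure_image_closedBall 1
  obtain ⟨t, htfin, htcover⟩ := (Metric.totallyBounded_iff).mp
    hCcomp.totallyBounded (ε / 9) (by linarith)
  have hev : ∀ᶠ n in atTop, ∀ y ∈ t, ‖y - P n y‖ < ε / 9 := by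
    rw [eventually_all_finite htfin]
    intro y _
    have := (hsot y).eventually (Metric.ball_mem_nhds y (show (0:ℝ) < ε / 9 by linarith))
    filter_upwards [this] with n hn
    rw [dist_eq_norm] at hn
    rw [show y - P n y = -(P n y - y) by abel, norm_neg]
    exact hn
  rw [eventually_atTop] at hev
  obtain ⟨N, hN⟩ := hev
  refine ⟨N, fun n hn => ?_⟩
  have hQK : ‖(1 - P n) ∘L K‖ ≤ ε / 3 := by
    apply ContinuousLinearMap.opNorm_le_bound _ (by linarith)
    intro x
    by_cases hx : x = 0
    · simp [hx]
    have hxn : (0:ℝ) < ‖x‖ := norm_pos_iff.mpr hx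
    set u : H := (‖x‖ : ℂ)⁻¹ • x with hu
    have hun : ‖u‖ = 1 := by
      rw [hu, norm_smul]
      simp [norm_inv, hxn.ne']
    have huC : K u ∈ closure (⇑K '' Metric.closedBall 0 1) := by
      apply subset_closure
      exact ⟨u, by simp [Metric.mem_closedBall, hun], rfl⟩
    obtain ⟨y, hyt, hyb⟩ := Set.mem_iUnion₂.mp (htcover huC)
    rw [Metric.mem_ball, dist_eq_norm] at hyb
    have hyP : ‖y - P n y‖ < ε / 9 := hN n hn y hyt
    have hKu : ‖(1 - P n) (K u)‖ ≤ ε / 3 := by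
      have e1 : (1 - P n) (K u) = (1 - P n) (K u - y) + (1 - P n) y := by
        rw [← map_add]; congr 1; abel
      have e2 : ‖(1 - P n) (K u - y)‖ ≤ ‖K u - y‖ := hQcontr n _
      have e3 : (1 - P n) y = y - P n y := by simp
      calc ‖(1 - P n) (K u)‖ ≤ ‖(1 - P n) (K u - y)‖ + ‖(1 - P n) y‖ := by
            rw [e1]; exact norm_add_le _ _
        _ ≤ ‖K u - y‖ + ‖y - P n y‖ := by rw [e3]; exact add_le_add e2 le_rfl
        _ ≤ ε / 9 + ε / 9 := add_le_add hyb.le hyP.le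
        _ ≤ ε / 3 := by linarith
    have hxu : x = (‖x‖ : ℂ) • u := by
      rw [hu, smul_smul]
      rw [mul_inv_cancel₀ (by exact_mod_cast hxn.ne')]
      simp
    calc ‖((1 - P n) ∘L K) x‖ = ‖x‖ * ‖(1 - P n) (K u)‖ := by
          conv_lhs => rw [hxu]
          simp only [ContinuousLinearMap.coe_comp', Function.comp_apply, map_smul,
            norm_smul]
          simp
      _ ≤ ‖x‖ * (ε / 3) := mul_le_mul_of_nonneg_left hKu (norm_nonneg x)
      _ = ε / 3 * ‖x‖ := mul_comm _ _
  -- decompose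
  have hdecomp : (1 - P n) ∘L T ∘L (1 - P n)
      = (1 - P n) ∘L ((T - K) ∘L (1 - P n)) + ((1 - P n) ∘L K) ∘L (1 - P n) := by
    ext x
    simp only [ContinuousLinearMap.coe_comp', Function.comp_apply,
      ContinuousLinearMap.sub_apply, ContinuousLinearMap.add_apply,
      ContinuousLinearMap.one_apply, map_sub]
    abel
  have hb1 : ‖(1 - P n) ∘L ((T - K) ∘L (1 - P n))‖ ≤ ‖T - K‖ := by
    calc ‖(1 - P n) ∘L ((T - K) ∘L (1 - P n))‖
        ≤ ‖(1 : H →L[ℂ] H) - P n‖ * ‖(T - K) ∘L (1 - P n)‖ :=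
          ContinuousLinearMap.opNorm_comp_le _ _
      _ ≤ 1 * (‖T - K‖ * ‖(1 : H →L[ℂ] H) - P n‖) := by
          apply mul_le_mul (hQnorm n) (ContinuousLinearMap.opNorm_comp_le _ _)
            (norm_nonneg _) zero_le_one
      _ ≤ 1 * (‖T - K‖ * 1) := by
          apply mul_le_mul_of_nonneg_left _ zero_le_one
          exact mul_le_mul_of_nonneg_left (hQnorm n) (norm_nonneg _)
      _ = ‖T - K‖ := by ring
  have hb2 : ‖((1 - P n) ∘L K) ∘L (1 - P n)‖ ≤ ε / 3 := by
    calc ‖((1 - P n) ∘L K) ∘L (1 - P n)‖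
        ≤ ‖(1 - P n) ∘L K‖ * ‖(1 : H →L[ℂ] H) - P n‖ :=
          ContinuousLinearMap.opNorm_comp_le _ _
      _ ≤ (ε / 3) * 1 := mul_le_mul hQK (hQnorm n) (norm_nonneg _) (by linarith)
      _ = ε / 3 := mul_one _
  have hTK : ‖T - K‖ < d + ε / 3 := by rwa [dist_eq_norm] at hKdist
  have hup : ‖(1 - P n) ∘L T ∘L (1 - P n)‖ < d + ε := by
    calc ‖(1 - P n) ∘L T ∘L (1 - P n)‖
        ≤ ‖(1 - P n) ∘L ((T - K) ∘L (1 - P n))‖ + ‖((1 - P n) ∘L K) ∘L (1 - P n)‖ := by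
          rw [hdecomp]; exact norm_add_le _ _
      _ ≤ ‖T - K‖ + ε / 3 := add_le_add hb1 hb2
      _ < d + ε := by linarith
  have hl := hlow n
  rw [Real.dist_eq, abs_of_nonneg (by linarith)]
  linarith
end

section
/- Let H be a Hilbert space, (P_n) an increasing sequence of finite rank orthogonal projections converging strongly to 1, and T a bounded operator with (1 − P_n) T P_n = 0 for all n (T is triangular with respect to the nest). Then dist(T, K(H)) ≥ inf{‖T − K‖ : K ∈ K(H), (1 − P_n) K P_n = 0 for all n}; i.e., the distance of T to the compacts equals its distance to the compact operators inside the nest algebra. -/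
open Filter Topology

section Aux

variable {H : Type*} [NormedAddCommGroup H] [InnerProductSpace ℂ H] [CompleteSpace H]

lemma aux_proj_pointwise {Q : H →L[ℂ] H} (hsa : IsSelfAdjoint Q) (hid : Q * Q = Q) (x : H) :
    ‖Q x‖ ≤ ‖x‖ := by
  rcases eq_or_ne (Q x) 0 with h0 | h0
  · simp [h0]
  have hadj : ContinuousLinearMap.adjoint Q = Q := ContinuousLinearMap.isSelfAdjoint_iff'.mp hsa
  have hQQ : Q (Q x) = Q x := by
    have := congrArg (fun S : H →L[ℂ] H => S x) hid
    simpa [ContinuousLinearMap.mul_apply] using this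
  have h1 : (inner ℂ (Q x) (Q x) : ℂ) = inner ℂ (Q x) x := by
    calc (inner ℂ (Q x) (Q x) : ℂ)
        = inner ℂ ((ContinuousLinearMap.adjoint Q) (Q x)) x :=
          (ContinuousLinearMap.adjoint_inner_left Q x (Q x)).symm
      _ = inner ℂ (Q x) x := by rw [hadj, hQQ]
  have h2 : ‖Q x‖ * ‖Q x‖ ≤ ‖x‖ * ‖Q x‖ := by
    calc ‖Q x‖ * ‖Q x‖ = RCLike.re (inner ℂ (Q x) (Q x) : ℂ) :=
          (inner_self_eq_norm_mul_norm (Q x)).symm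
      _ = RCLike.re (inner ℂ (Q x) x : ℂ) := by rw [h1]
      _ ≤ ‖(inner ℂ (Q x) x : ℂ)‖ := RCLike.re_le_norm _
      _ ≤ ‖Q x‖ * ‖x‖ := norm_inner_le_norm (Q x) x
      _ = ‖x‖ * ‖Q x‖ := mul_comm _ _
  exact le_of_mul_le_mul_right h2 (norm_pos_iff.mpr h0)

omit [CompleteSpace H] in
lemma aux_opnorm_le {f : H →L[ℂ] H} {r a : ℝ} (hr : 0 < r) (ha : 0 ≤ a)
    (h : ∀ x : H, ‖x‖ ≤ r → ‖f x‖ ≤ a) : ‖f‖ ≤ a / r := by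
  apply f.opNorm_le_bound (div_nonneg ha hr.le)
  intro x
  rcases eq_or_ne x 0 with rfl | hx
  · simp
  · have hxn : (0 : ℝ) < ‖x‖ := norm_pos_iff.mpr hx
    set y : H := ((r / ‖x‖ : ℝ) : ℂ) • x with hy
    have hyn : ‖y‖ = r := by
      rw [hy, norm_smul]
      simp only [Complex.norm_real, Real.norm_eq_abs]
      rw [abs_of_pos (div_pos hr hxn)]
      field_simp
    have hfy : ‖f y‖ = r / ‖x‖ * ‖f x‖ := by
      rw [hy, map_smul, norm_smul]
      simp only [Complex.norm_real, Real.norm_eq_abs]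
      rw [abs_of_pos (div_pos hr hxn)]
    have hle : r / ‖x‖ * ‖f x‖ ≤ a := hfy ▸ h y (le_of_eq hyn)
    rw [div_mul_eq_mul_div, le_div_iff₀ hr]
    calc ‖f x‖ * r = (r / ‖x‖ * ‖f x‖) * ‖x‖ := by field_simp
      _ ≤ a * ‖x‖ := mul_le_mul_of_nonneg_right hle (norm_nonneg x)

omit [CompleteSpace H] in
lemma aux_finrank_compact {Q : H →L[ℂ] H}
    (h : FiniteDimensional ℂ (LinearMap.range (Q : H →ₗ[ℂ] H))) : IsCompactOperator ⇑Q := by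
  set V : Submodule ℂ H := LinearMap.range (Q : H →ₗ[ℂ] H)
  haveI : FiniteDimensional ℂ V := h
  haveI : ProperSpace V := FiniteDimensional.proper ℂ V
  refine ⟨(Subtype.val : V → H) '' Metric.closedBall 0 ‖Q‖, ?_, ?_⟩
  · exact (isCompact_closedBall (0 : V) ‖Q‖).image continuous_subtype_val
  · have hsub : Metric.closedBall (0 : H) 1 ⊆
        ⇑Q ⁻¹' ((Subtype.val : V → H) '' Metric.closedBall 0 ‖Q‖) := by
      intro x hx
      have hmem : Q x ∈ V := LinearMap.mem_range_self _ x
      refine ⟨⟨Q x, hmem⟩, ?_, rfl⟩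
      rw [Metric.mem_closedBall, dist_zero_right]
      have hn : ‖(⟨Q x, hmem⟩ : V)‖ = ‖Q x‖ := rfl
      rw [hn]
      calc ‖Q x‖ ≤ ‖Q‖ * ‖x‖ := Q.le_opNorm x
        _ ≤ ‖Q‖ * 1 := by
            apply mul_le_mul_of_nonneg_left _ (norm_nonneg Q)
            simpa [dist_zero_right] using hx
        _ = ‖Q‖ := mul_one _
    exact Filter.mem_of_superset (Metric.closedBall_mem_nhds 0 one_pos) hsub

end Aux

theorem stmt6 {H : Type*} [NormedAddCommGroup H] [InnerProductSpace ℂ H] [CompleteSpace H]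
    (P : ℕ → H →L[ℂ] H) (hproj : ∀ n, IsFinRankProj (P n))
    (hmono : ∀ n, P (n + 1) ∘L P n = P n)
    (hsot : ∀ x : H, Tendsto (fun n => P n x) atTop (𝓝 x))
    (T : H →L[ℂ] H) (hT : ∀ n, (1 - P n) ∘L T ∘L P n = 0) :
    Metric.infDist T {K : H →L[ℂ] H | IsCompactOperator ⇑K} =
      Metric.infDist T
        {K : H →L[ℂ] H | IsCompactOperator ⇑K ∧ ∀ n, (1 - P n) ∘L K ∘L P n = 0} := by
  set S₁ : Set (H →L[ℂ] H) := {K | IsCompactOperator ⇑K}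
  set S₂ : Set (H →L[ℂ] H) := {K | IsCompactOperator ⇑K ∧ ∀ n, (1 - P n) ∘L K ∘L P n = 0}
  -- multiplicative forms of the hypotheses
  have hidem : ∀ n, P n * P n = P n := fun n => (hproj n).2.1
  have hmono' : ∀ n, P (n + 1) * P n = P n := hmono
  have hT' : ∀ n, (1 - P n) * (T * P n) = 0 := hT
  have h0c : IsCompactOperator ⇑(0 : H →L[ℂ] H) := by
    have h : ⇑(0 : H →L[ℂ] H) = (0 : H → H) := rfl
    rw [h]; exact isCompactOperator_zero
  have h0mem₂ : (0 : H →L[ℂ] H) ∈ S₂ := ⟨h0c, fun n => by simp⟩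
  have hne₂ : S₂.Nonempty := ⟨0, h0mem₂⟩
  have hne₁ : S₁.Nonempty := ⟨0, h0c⟩
  have hsub : S₂ ⊆ S₁ := fun K hK => hK.1
  -- basic projection facts
  have hQ1 : ∀ n (x : H), ‖(1 - P n) x‖ ≤ ‖x‖ := by
    intro n x
    have hsa : IsSelfAdjoint (1 - P n) := (IsSelfAdjoint.one (R := H →L[ℂ] H)).sub (hproj n).1
    have hid : (1 - P n) * (1 - P n) = 1 - P n := by
      rw [sub_mul, mul_sub, mul_sub, one_mul, mul_one, hidem n]
      abel
    exact aux_proj_pointwise hsa hid x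
  have hQnorm : ∀ n, ‖(1 - P n : H →L[ℂ] H)‖ ≤ 1 := fun n =>
    ContinuousLinearMap.opNorm_le_bound _ zero_le_one (fun x => by simpa using hQ1 n x)
  -- monotonicity of projections
  have hPc : ∀ m n, m ≤ n → P n * P m = P m := by
    intro m n h
    induction n with
    | zero => rw [Nat.le_zero.mp h]; exact hidem 0
    | succ k ih =>
      rcases Nat.lt_or_ge m (k + 1) with h' | h'
      · have hmk : m ≤ k := Nat.lt_succ_iff.mp h'
        calc P (k + 1) * P m = P (k + 1) * (P k * P m) := by rw [ih hmk]
          _ = P (k + 1) * P k * P m := by rw [mul_assoc]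
          _ = P k * P m := by rw [hmono' k]
          _ = P m := ih hmk
      · have hmeq : m = k + 1 := le_antisymm h h'
        rw [hmeq]; exact hidem (k + 1)
  -- hT reformulated
  have hTP : ∀ k, T * P k = P k * (T * P k) := by
    intro k
    have h := hT' k
    rwa [sub_mul, one_mul, sub_eq_zero] at h
  -- one direction
  apply le_antisymm (Metric.infDist_le_infDist_of_subset hsub hne₂)
  -- the other direction
  apply le_of_forall_pos_le_add
  intro ε hε
  have hd : Metric.infDist T S₁ < Metric.infDist T S₁ + ε / 2 := by linarith
  obtain ⟨K, hK, hdK⟩ := (Metric.infDist_lt_iff hne₁).mp hd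
  -- K is a compact operator; find n with ‖(1-Pn) K (1-Pn)‖ small
  obtain ⟨C, hCc, hCn⟩ := hK
  obtain ⟨r, hr, hball⟩ := Metric.nhds_basis_closedBall.mem_iff.mp hCn
  have hδ : (0 : ℝ) < ε * r / 8 := by positivity
  obtain ⟨t, htfin, htcov⟩ := Metric.totallyBounded_iff.mp hCc.totallyBounded _ hδ
  have hev : ∀ᶠ n in atTop, ∀ y ∈ t, ‖y - P n y‖ < ε * r / 8 := by
    rw [htfin.eventually_all]
    intro y _
    have h2 : Tendsto (fun n => ‖P n y - y‖) atTop (𝓝 0) := by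
      simpa using (tendsto_iff_norm_sub_tendsto_zero.mp (hsot y))
    have h3 := (Metric.tendsto_atTop.mp h2) (ε * r / 8) hδ
    filter_upwards [Filter.eventually_atTop.mpr h3] with n hn
    rw [← norm_neg]
    simpa [dist_eq_norm] using hn
  obtain ⟨n, hn⟩ := Filter.eventually_atTop.mp hev
  have hnP := hn n le_rfl
  -- bound ‖(1 - P n) * K‖
  have hKb : ‖(1 - P n) * K‖ ≤ ε / 2 := by
    have key : ∀ x : H, ‖x‖ ≤ r → ‖((1 - P n) * K) x‖ ≤ 3 * (ε * r / 8) := by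
      intro x hx
      have hxC : K x ∈ C := hball (by simpa [dist_zero_right] using hx)
      obtain ⟨y, hyt, hyb⟩ := Set.mem_iUnion₂.mp (htcov hxC)
      have hyd : ‖K x - y‖ < ε * r / 8 := by
        rw [← dist_eq_norm]; simpa [Metric.mem_ball, dist_comm] using hyb
      have happ : ((1 - P n) * K) x = (1 - P n) (K x - y) + (1 - P n) y := by
        simp [ContinuousLinearMap.mul_apply, map_sub]
      rw [happ]
      calc ‖(1 - P n) (K x - y) + (1 - P n) y‖
          ≤ ‖(1 - P n) (K x - y)‖ + ‖(1 - P n) y‖ := norm_add_le _ _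
        _ ≤ ‖K x - y‖ + ‖y - P n y‖ := by
            apply add_le_add (hQ1 n _)
            simp only [ContinuousLinearMap.sub_apply, ContinuousLinearMap.one_apply]
            exact le_rfl
        _ ≤ ε * r / 8 + ε * r / 8 := add_le_add hyd.le (hnP y hyt).le
        _ ≤ 3 * (ε * r / 8) := by linarith [hδ.le]
    have hb := aux_opnorm_le hr (by positivity) key
    calc ‖(1 - P n) * K‖ ≤ 3 * (ε * r / 8) / r := hb
      _ = 3 * ε / 8 := by field_simp
      _ ≤ ε / 2 := by linarith
  -- candidate K' := P n * T
  set K' : H →L[ℂ] H := P n * T with hK'def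
  have hK'compact : IsCompactOperator ⇑K' := by
    have hco : ⇑K' = ⇑(P n) ∘ ⇑T := rfl
    rw [hco]
    exact (aux_finrank_compact (hproj n).2.2).comp_clm T
  have hK'nest : ∀ m, (1 - P m) ∘L K' ∘L P m = 0 := by
    intro m
    show (1 - P m) * (K' * P m) = 0
    rcases le_total m n with h | h
    · have hKP : K' * P m = T * P m := by
        rw [hK'def, mul_assoc, hTP m, ← mul_assoc, hPc m n h, ← hTP m]
      rw [hKP]
      exact hT' m
    · have hz : (1 - P m) * P n = 0 := by
        rw [sub_mul, one_mul, hPc n m h, sub_self]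
      rw [hK'def, ← mul_assoc, ← mul_assoc, hz, zero_mul, zero_mul]
  have hK'mem : K' ∈ S₂ := ⟨hK'compact, hK'nest⟩
  -- norm estimate: T - K' = (1-Pn) T = (1-Pn)(T - K)(1-Pn) + (1-Pn) K (1-Pn)
  have hTK' : T - K' = (1 - P n) * T := by
    rw [hK'def, sub_mul, one_mul]
  have hfact : (1 - P n) * T = (1 - P n) * (T * (1 - P n)) := by
    rw [mul_sub, mul_one, mul_sub, hT' n, sub_zero]
  have hsplit : T - K' = (1 - P n) * ((T - K) * (1 - P n)) + (1 - P n) * (K * (1 - P n)) := by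
    rw [hTK', hfact, ← mul_add, ← add_mul, sub_add_cancel]
  have hnorm1 : ‖(1 - P n) * ((T - K) * (1 - P n))‖ ≤ ‖T - K‖ := by
    calc ‖(1 - P n) * ((T - K) * (1 - P n))‖
        ≤ ‖(1 - P n : H →L[ℂ] H)‖ * ‖(T - K) * (1 - P n)‖ := norm_mul_le _ _
      _ ≤ 1 * (‖T - K‖ * ‖(1 - P n : H →L[ℂ] H)‖) :=
          mul_le_mul (hQnorm n) (norm_mul_le _ _) (norm_nonneg _) zero_le_one
      _ ≤ 1 * (‖T - K‖ * 1) := by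
          apply mul_le_mul_of_nonneg_left _ zero_le_one
          exact mul_le_mul_of_nonneg_left (hQnorm n) (norm_nonneg _)
      _ = ‖T - K‖ := by ring
  have hnorm2 : ‖(1 - P n) * (K * (1 - P n))‖ ≤ ε / 2 := by
    calc ‖(1 - P n) * (K * (1 - P n))‖ = ‖(1 - P n) * K * (1 - P n)‖ := by rw [mul_assoc]
      _ ≤ ‖(1 - P n) * K‖ * ‖(1 - P n : H →L[ℂ] H)‖ := norm_mul_le _ _
      _ ≤ (ε / 2) * 1 := mul_le_mul hKb (hQnorm n) (norm_nonneg _) (by positivity)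
      _ = ε / 2 := mul_one _
  have hfinal : dist T K' ≤ dist T K + ε / 2 := by
    rw [dist_eq_norm, dist_eq_norm]
    calc ‖T - K'‖
        ≤ ‖(1 - P n) * ((T - K) * (1 - P n))‖ + ‖(1 - P n) * (K * (1 - P n))‖ := by
          rw [hsplit]; exact norm_add_le _ _
      _ ≤ ‖T - K‖ + ε / 2 := add_le_add hnorm1 hnorm2
  calc Metric.infDist T S₂ ≤ dist T K' := Metric.infDist_le_dist_of_mem hK'mem
    _ ≤ dist T K + ε / 2 := hfinal
    _ ≤ (Metric.infDist T S₁ + ε / 2) + ε / 2 := by linarith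
    _ = Metric.infDist T S₁ + ε := by ring
end

section
/- Let U be the bilateral shift on ℓ²(ℤ), P the rank-one projection onto ℂe_0, and T = U + P. Then ‖T^n‖ ≥ √n for all n ≥ 1, while dist(T^n, K(ℓ²(ℤ))) = 1 for all n ≥ 1. Consequently, the quotient map onto the Calkin algebra is not bounded below on the algebra generated by T, and the closed algebra generated by T plus the compacts is not closed. -/
set_option synthInstance.maxHeartbeats 1000000
set_option maxHeartbeats 1000000

open Filter Topology
set_option linter.unusedSectionVars false

namespace Stmt16Aux

local notation "⟪" x ", " y "⟫" => @inner ℂ _ _ x y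

variable {H : Type*} [NormedAddCommGroup H] [InnerProductSpace ℂ H] [CompleteSpace H]
    (b : HilbertBasis ℤ ℂ H)

lemma inner_bb (i j : ℤ) : ⟪b i, b j⟫ = if i = j then 1 else 0 :=
  orthonormal_iff_ite.mp b.orthonormal i j

lemma inner_bb_ne {i j : ℤ} (h : i ≠ j) : ⟪b i, b j⟫ = 0 := by
  rw [inner_bb b i j, if_neg h]

lemma norm_b (i : ℤ) : ‖b i‖ = 1 := b.orthonormal.1 i

lemma inner_b_le (i : ℤ) (v : H) : ‖⟪b i, v⟫‖ ≤ ‖v‖ := by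
  simpa [norm_b b i] using norm_inner_le_norm (𝕜 := ℂ) (b i) v

variable (U : H →L[ℂ] H)

lemma U_norm_eq (hU2 : ContinuousLinearMap.adjoint U ∘L U = 1) (x : H) : ‖U x‖ = ‖x‖ := by
  have h1 : ⟪U x, U x⟫ = ⟪x, x⟫ := by
    rw [← ContinuousLinearMap.adjoint_inner_left]
    have : ContinuousLinearMap.adjoint U (U x) = x := by
      have := congrArg (fun (f : H →L[ℂ] H) => f x) hU2
      simpa using this
    rw [this]
  have h2 : ‖U x‖ ^ 2 = ‖x‖ ^ 2 := by
    rw [← inner_self_eq_norm_sq (𝕜 := ℂ), ← inner_self_eq_norm_sq (𝕜 := ℂ), h1]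
  have h3 := congrArg Real.sqrt h2
  rwa [Real.sqrt_sq (norm_nonneg _), Real.sqrt_sq (norm_nonneg _)] at h3

lemma Upow_apply (hU : ∀ n : ℤ, U (b n) = b (n + 1)) (n : ℕ) (m : ℤ) :
    (U ^ n) (b m) = b (m + n) := by
  induction n generalizing m with
  | zero => simp
  | succ n ih =>
    rw [pow_succ, ContinuousLinearMap.mul_apply, hU, ih]
    congr 1; push_cast; ring

lemma Upow_norm_apply (hU2 : ContinuousLinearMap.adjoint U ∘L U = 1) (n : ℕ) (x : H) :
    ‖(U ^ n) x‖ = ‖x‖ := by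
  induction n with
  | zero => simp
  | succ n ih =>
    rw [pow_succ', ContinuousLinearMap.mul_apply, U_norm_eq U hU2, ih]

lemma Upow_opNorm (hU2 : ContinuousLinearMap.adjoint U ∘L U = 1) (n : ℕ) :
    ‖(U ^ n : H →L[ℂ] H)‖ ≤ 1 := by
  refine ContinuousLinearMap.opNorm_le_bound _ zero_le_one (fun x => ?_)
  rw [Upow_norm_apply U hU2, one_mul]


variable (P T : H →L[ℂ] H)

lemma T_apply_b (hU : ∀ n : ℤ, U (b n) = b (n + 1))
    (hP : P = (innerSL ℂ (b 0)).smulRight (b 0)) (hT : T = U + P) (m : ℤ) :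
    T (b m) = b (m + 1) + if m = 0 then b 0 else 0 := by
  have hPb : P (b m) = if m = 0 then b 0 else 0 := by
    rw [hP]
    rcases eq_or_ne m 0 with h | h
    · subst h
      simp [ContinuousLinearMap.smulRight_apply, innerSL_apply_apply, inner_bb b 0 0, norm_b b 0]
    · simp [ContinuousLinearMap.smulRight_apply, innerSL_apply_apply,
        inner_bb_ne b (Ne.symm h), h]
  rw [hT, ContinuousLinearMap.add_apply, hU, hPb]

lemma Tpow_zero (hU : ∀ n : ℤ, U (b n) = b (n + 1))
    (hP : P = (innerSL ℂ (b 0)).smulRight (b 0)) (hT : T = U + P) (n : ℕ) :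
    (T ^ n) (b 0) = ∑ i ∈ Finset.range (n + 1), b (i : ℤ) := by
  induction n with
  | zero => simp
  | succ n ih =>
    rw [pow_succ', ContinuousLinearMap.mul_apply, ih, map_sum]
    have h1 : ∀ i ∈ Finset.range (n + 1),
        T (b (i : ℤ)) = b ((i : ℤ) + 1) + (if (i : ℤ) = 0 then b 0 else 0) := by
      intro i _
      exact T_apply_b b U P T hU hP hT i
    rw [Finset.sum_congr rfl h1, Finset.sum_add_distrib]
    have h2 : (∑ i ∈ Finset.range (n + 1), if (i : ℤ) = 0 then b 0 else (0 : H)) = b 0 := by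
      have := Finset.sum_eq_single_of_mem (s := Finset.range (n + 1))
        (f := fun i => if (i : ℤ) = 0 then b 0 else (0 : H)) 0
        (Finset.mem_range.mpr (Nat.succ_pos n))
        (fun i _ hi => by simp only [if_neg (show (i:ℤ) ≠ 0 by exact_mod_cast hi)])
      simpa using this
    rw [h2, Finset.sum_range_succ' (fun i => b (i : ℤ)) (n + 1)]
    congr 1

lemma Tpow_neg (hU : ∀ n : ℤ, U (b n) = b (n + 1))
    (hP : P = (innerSL ℂ (b 0)).smulRight (b 0)) (hT : T = U + P) (d : ℕ) (m : ℤ)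
    (hm : m + d ≤ 0) : (T ^ d) (b m) = b (m + d) := by
  induction d generalizing m with
  | zero => simp
  | succ d ih =>
    have hm0 : m ≠ 0 := by
      intro h; rw [h] at hm; push_cast at hm; omega
    rw [pow_succ, ContinuousLinearMap.mul_apply, T_apply_b b U P T hU hP hT, if_neg hm0,
      add_zero, ih (m + 1) (by push_cast at hm ⊢; omega)]
    congr 1; push_cast; ring

lemma norm_sum_b_nat (n : ℕ) : ‖∑ i ∈ Finset.range n, b (i : ℤ)‖ = Real.sqrt n := by
  have ho : Orthonormal ℂ (fun i : ℕ => b (i : ℤ)) :=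
    b.orthonormal.comp _ (fun x y h => by exact_mod_cast h)
  have h0 : (∑ i ∈ Finset.range n, b (i : ℤ))
      = ∑ i ∈ Finset.range n, (1 : ℂ) • (fun i : ℕ => b (i : ℤ)) i := by simp
  have h1 : ⟪∑ i ∈ Finset.range n, b (i : ℤ), ∑ i ∈ Finset.range n, b (i : ℤ)⟫ = (n : ℂ) := by
    rw [h0, ho.inner_sum (fun _ => (1 : ℂ)) (fun _ => (1 : ℂ)) (Finset.range n)]
    simp
  rw [norm_eq_sqrt_re_inner (𝕜 := ℂ), h1]
  norm_num

lemma norm_sum_b (s : Finset ℤ) : ‖∑ i ∈ s, b i‖ = Real.sqrt s.card := by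
  have h0 : (∑ i ∈ s, b i) = ∑ i ∈ s, (1 : ℂ) • b i := by simp
  have h1 : ⟪∑ i ∈ s, b i, ∑ i ∈ s, b i⟫ = (s.card : ℂ) := by
    rw [h0, b.orthonormal.inner_sum (fun _ => (1:ℂ)) (fun _ => (1:ℂ)) s]
    simp
  rw [norm_eq_sqrt_re_inner (𝕜 := ℂ), h1]
  norm_num


lemma inner_coeff_tendsto (v : H) (g : ℕ → ℤ) (hg : Tendsto g atTop cofinite) :
    Tendsto (fun j => ⟪b (g j), v⟫) atTop (𝓝 0) := by
  have hsum : Summable (fun i : ℤ => ⟪v, b i⟫ * ⟪b i, v⟫) := b.summable_inner_mul_inner v v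
  have h1 : Tendsto (fun j => ⟪v, b (g j)⟫ * ⟪b (g j), v⟫) atTop (𝓝 0) :=
    hsum.tendsto_cofinite_zero.comp hg
  have h2 : Tendsto (fun j => ‖⟪v, b (g j)⟫ * ⟪b (g j), v⟫‖) atTop (𝓝 0) := by
    simpa using h1.norm
  rw [tendsto_zero_iff_norm_tendsto_zero]
  have h3 : ∀ j, ‖⟪b (g j), v⟫‖ = Real.sqrt ‖⟪v, b (g j)⟫ * ⟪b (g j), v⟫‖ := by
    intro j
    rw [norm_mul, norm_inner_symm v (b (g j)), Real.sqrt_mul_self (norm_nonneg _)]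
  simp_rw [h3]
  have hsq : Tendsto Real.sqrt (𝓝 0) (𝓝 0) := by
    simpa using (Real.continuous_sqrt.tendsto 0)
  exact hsq.comp h2

lemma compact_column_tendsto {k : H →L[ℂ] H} (hk : IsCompactOperator ⇑k)
    (g : ℕ → ℤ) (hg : Tendsto g atTop cofinite) :
    Tendsto (fun j => ‖k (b (g j))‖) atTop (𝓝 0) := by
  obtain ⟨W, hW, hWk⟩ := hk
  obtain ⟨ε, hε, hball⟩ := Metric.mem_nhds_iff.mp hWk
  set c : ℝ := ε / 2 with hc
  have hc0 : 0 < c := by positivity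
  apply Filter.tendsto_of_subseq_tendsto
  intro ns hns
  have hmem : ∀ j, k (((c : ℝ) : ℂ) • b (g (ns j))) ∈ W := by
    intro j
    apply hball
    rw [Metric.mem_ball, dist_zero_right, norm_smul]
    rw [Complex.norm_real, norm_b]
    simp only [mul_one, Real.norm_eq_abs, abs_of_pos hc0]
    rw [hc]; linarith
  obtain ⟨v0, hv0W, φ, hφ, hlim⟩ := hW.tendsto_subseq hmem
  have hgt : Tendsto (fun j => g (ns (φ j))) atTop cofinite :=
    hg.comp (hns.comp hφ.tendsto_atTop)
  have hv0 : v0 = 0 := by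
    have key : ∀ w : H, ⟪w, v0⟫ = 0 := by
      intro w
      have hA : Tendsto (fun j => ⟪w, k (((c : ℝ) : ℂ) • b (g (ns (φ j))))⟫) atTop
          (𝓝 ⟪w, v0⟫) := Filter.Tendsto.inner tendsto_const_nhds hlim
      have hB : Tendsto (fun j => ⟪w, k (((c : ℝ) : ℂ) • b (g (ns (φ j))))⟫) atTop (𝓝 0) := by
        have heq : ∀ j, ⟪w, k (((c : ℝ) : ℂ) • b (g (ns (φ j))))⟫
            = ((c : ℝ) : ℂ) * (starRingEnd ℂ) ⟪b (g (ns (φ j))), ContinuousLinearMap.adjoint k w⟫ := by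
          intro j
          rw [← ContinuousLinearMap.adjoint_inner_left, inner_smul_right, inner_conj_symm]
        simp_rw [heq]
        have h0 : Tendsto (fun j => ⟪b (g (ns (φ j))), ContinuousLinearMap.adjoint k w⟫)
            atTop (𝓝 0) := inner_coeff_tendsto b (ContinuousLinearMap.adjoint k w) _ hgt
        have h1 : Tendsto (fun j => (starRingEnd ℂ)
            ⟪b (g (ns (φ j))), ContinuousLinearMap.adjoint k w⟫) atTop (𝓝 0) := by
          have h1' := (Complex.continuous_conj.tendsto 0).comp h0
          rw [map_zero] at h1'
          exact h1'
        have h2 := h1.const_mul (((c : ℝ) : ℂ))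
        rw [mul_zero] at h2
        exact h2
      exact tendsto_nhds_unique hA hB
    have := key v0
    rwa [inner_self_eq_zero] at this
  refine ⟨φ, ?_⟩
  have hnlim : Tendsto (fun j => ‖k (((c : ℝ) : ℂ) • b (g (ns (φ j))))‖) atTop (𝓝 0) := by
    rw [hv0] at hlim
    simpa using hlim.norm
  have heq : ∀ j, ‖k (b (g (ns (φ j))))‖ = c⁻¹ * ‖k (((c : ℝ) : ℂ) • b (g (ns (φ j))))‖ := by
    intro j
    rw [map_smul, norm_smul, Complex.norm_real]
    rw [Real.norm_eq_abs, abs_of_pos hc0]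
    field_simp
  have : Tendsto (fun j => c⁻¹ * ‖k (((c : ℝ) : ℂ) • b (g (ns (φ j))))‖) atTop (𝓝 0) := by
    simpa using hnlim.const_mul c⁻¹
  exact Tendsto.congr (fun j => (heq j).symm) this

lemma neg_seq_tendsto : Tendsto (fun j : ℕ => -(j : ℤ) - 1) atTop cofinite := by
  have hinj : Function.Injective (fun j : ℕ => -(j : ℤ) - 1) := by
    intro a b h; simpa using h
  have := hinj.tendsto_cofinite
  rwa [Nat.cofinite_eq_atTop] at this

lemma nat_seq_tendsto : Tendsto (fun j : ℕ => (j : ℤ)) atTop cofinite := by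
  have hinj : Function.Injective (fun j : ℕ => (j : ℤ)) := by
    intro a b h; simpa using h
  have := hinj.tendsto_cofinite
  rwa [Nat.cofinite_eq_atTop] at this


lemma P_compact (hP : P = (innerSL ℂ (b 0)).smulRight (b 0)) : IsCompactOperator ⇑P := by
  refine ⟨(fun c : ℂ => c • b 0) '' Metric.closedBall 0 1,
    (isCompact_closedBall (0:ℂ) 1).image (by continuity), ?_⟩
  refine Filter.mem_of_superset (Metric.ball_mem_nhds 0 one_pos) ?_
  intro x hx
  refine ⟨⟪b 0, x⟫, ?_, ?_⟩
  · rw [Metric.mem_closedBall, dist_zero_right]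
    calc ‖⟪b 0, x⟫‖ ≤ ‖x‖ := inner_b_le b 0 x
      _ ≤ 1 := le_of_lt (by simpa [dist_zero_right] using hx)
  · rw [hP]; rfl

lemma TU_compact (hU : ∀ n : ℤ, U (b n) = b (n + 1))
    (hP : P = (innerSL ℂ (b 0)).smulRight (b 0)) (hT : T = U + P) (n : ℕ) :
    IsCompactOperator ⇑(T ^ n - U ^ n) := by
  induction n with
  | zero => simpa using isCompactOperator_zero
  | succ n ih =>
    have key : T ^ (n + 1) - U ^ (n + 1) = T ∘L (T ^ n - U ^ n) + P ∘L U ^ n := by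
      have hPTU : P = T - U := by rw [hT]; abel
      rw [hPTU]
      ext x
      simp only [pow_succ', ContinuousLinearMap.mul_apply, ContinuousLinearMap.sub_apply,
        ContinuousLinearMap.add_apply, ContinuousLinearMap.comp_apply, map_sub]
      abel
    have h1 : IsCompactOperator ⇑(T ∘L (T ^ n - U ^ n)) := by
      rw [ContinuousLinearMap.coe_comp']
      exact ih.continuous_comp T.continuous
    have h2 : IsCompactOperator ⇑(P ∘L (U ^ n)) := by
      rw [ContinuousLinearMap.coe_comp']
      exact (P_compact b P hP).comp_clm (U ^ n)
    have h3 := h1.add h2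
    rw [key, ContinuousLinearMap.coe_add']
    exact h3


lemma adjoin_repr {a : H →L[ℂ] H} (ha : a ∈ Algebra.adjoin ℂ ({T} : Set (H →L[ℂ] H))) :
    ∃ (N : ℕ) (c : ℕ → ℂ), a = ∑ i ∈ Finset.range N, c i • T ^ i := by
  rw [Algebra.adjoin_singleton_eq_range_aeval] at ha
  obtain ⟨p, hp⟩ := ha
  refine ⟨p.natDegree + 1, fun i => p.coeff i, ?_⟩
  rw [← hp]
  show (Polynomial.aeval T) p = _
  rw [Polynomial.aeval_eq_sum_range]

lemma inner_b_sum_range (m i : ℕ) :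
    ⟪b (m : ℤ), ∑ j ∈ Finset.range i, b (j : ℤ)⟫ = if m < i then 1 else 0 := by
  rw [inner_sum]
  have h1 : ∀ j ∈ Finset.range i, ⟪b (m : ℤ), b (j : ℤ)⟫ = if m = j then (1:ℂ) else 0 := by
    intro j _
    rw [inner_bb b]
    simp [Nat.cast_inj]
  rw [Finset.sum_congr rfl h1, Finset.sum_ite_eq (Finset.range i) m (fun _ => (1:ℂ))]
  simp [Finset.mem_range]

lemma poly_entry_zero (hU : ∀ n : ℤ, U (b n) = b (n + 1))
    (hP : P = (innerSL ℂ (b 0)).smulRight (b 0)) (hT : T = U + P) (N : ℕ) (c : ℕ → ℂ) (m : ℕ) :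
    ⟪b (m : ℤ), (∑ i ∈ Finset.range N, c i • T ^ i) (b 0)⟫
      = ∑ i ∈ Finset.range N, c i * (if m < i + 1 then 1 else 0) := by
  rw [ContinuousLinearMap.sum_apply, inner_sum]
  refine Finset.sum_congr rfl (fun i _ => ?_)
  rw [ContinuousLinearMap.smul_apply, inner_smul_right, Tpow_zero b U P T hU hP hT i,
    inner_b_sum_range b m (i + 1)]

lemma poly_entry_zero_neg (hU : ∀ n : ℤ, U (b n) = b (n + 1))
    (hP : P = (innerSL ℂ (b 0)).smulRight (b 0)) (hT : T = U + P) (N : ℕ) (c : ℕ → ℂ)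
    (m : ℤ) (hm : m < 0) :
    ⟪b m, (∑ i ∈ Finset.range N, c i • T ^ i) (b 0)⟫ = 0 := by
  rw [ContinuousLinearMap.sum_apply, inner_sum]
  refine Finset.sum_eq_zero (fun i _ => ?_)
  rw [ContinuousLinearMap.smul_apply, inner_smul_right, Tpow_zero b U P T hU hP hT i]
  have h1 : ⟪b m, ∑ j ∈ Finset.range (i + 1), b (j : ℤ)⟫ = 0 := by
    rw [inner_sum]
    refine Finset.sum_eq_zero (fun j _ => ?_)
    exact inner_bb_ne b (show m ≠ (j : ℤ) by have := Int.natCast_nonneg j; omega)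
  rw [h1, mul_zero]

lemma poly_diff_entry (hU : ∀ n : ℤ, U (b n) = b (n + 1))
    (hP : P = (innerSL ℂ (b 0)).smulRight (b 0)) (hT : T = U + P) (N : ℕ) (c : ℕ → ℂ) (m : ℕ) :
    ⟪b (m : ℤ), (∑ i ∈ Finset.range N, c i • T ^ i) (b 0)⟫
      - ⟪b ((m : ℤ) + 1), (∑ i ∈ Finset.range N, c i • T ^ i) (b 0)⟫
      = if m < N then c m else 0 := by
  have hcast : ((m : ℤ) + 1) = ((m + 1 : ℕ) : ℤ) := by push_cast; ring
  rw [poly_entry_zero b U P T hU hP hT N c m, hcast, poly_entry_zero b U P T hU hP hT N c (m+1),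
    ← Finset.sum_sub_distrib]
  have h1 : ∀ i ∈ Finset.range N,
      (c i * (if m < i + 1 then (1:ℂ) else 0) - c i * (if m + 1 < i + 1 then (1:ℂ) else 0))
        = if m = i then c i else 0 := by
    intro i _
    rcases eq_or_ne m i with h | h
    · subst h; simp
    · rcases Nat.lt_or_ge m i with h2 | h2
      · rw [if_pos (by omega), if_pos (by omega), if_neg h]; ring
      · rw [if_neg (by omega), if_neg (by omega), if_neg h]; ring
  rw [Finset.sum_congr rfl h1, Finset.sum_ite_eq (Finset.range N) m c]
  simp [Finset.mem_range]

lemma poly_entry_neg (hU : ∀ n : ℤ, U (b n) = b (n + 1))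
    (hP : P = (innerSL ℂ (b 0)).smulRight (b 0)) (hT : T = U + P) (N : ℕ) (c : ℕ → ℂ)
    (j : ℕ) (hj : N ≤ j + 1) (m : ℕ) :
    ⟪b ((-(j : ℤ) - 1) + m), (∑ i ∈ Finset.range N, c i • T ^ i) (b (-(j : ℤ) - 1))⟫
      = if m < N then c m else 0 := by
  rw [ContinuousLinearMap.sum_apply, inner_sum]
  have h1 : ∀ i ∈ Finset.range N,
      ⟪b ((-(j : ℤ) - 1) + m), (c i • T ^ i) (b (-(j : ℤ) - 1))⟫
        = if m = i then c i else 0 := by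
    intro i hi
    rw [Finset.mem_range] at hi
    rw [ContinuousLinearMap.smul_apply, inner_smul_right,
      Tpow_neg b U P T hU hP hT i (-(j : ℤ) - 1) (by omega)]
    rw [inner_bb b]
    have : ((-(j : ℤ) - 1) + m = (-(j : ℤ) - 1) + i) ↔ (m = i) := by omega
    rcases eq_or_ne m i with h | h
    · rw [if_pos (this.mpr h), if_pos h, mul_one]
    · rw [if_neg (fun hh => h (this.mp hh)), if_neg h, mul_zero]
  rw [Finset.sum_congr rfl h1, Finset.sum_ite_eq (Finset.range N) m c]
  simp [Finset.mem_range]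


lemma norm_le_of_forall_eps {z : ℂ} (h : ∀ ε : ℝ, 0 < ε → ‖z‖ ≤ ε) : z = 0 := by
  have h0 : ‖z‖ ≤ 0 := by
    refine le_of_forall_pos_le_add (fun ε hε => ?_)
    rw [zero_add]; exact h ε hε
  exact norm_le_zero_iff.mp h0

lemma key_kernel (hU : ∀ n : ℤ, U (b n) = b (n + 1))
    (hP : P = (innerSL ℂ (b 0)).smulRight (b 0)) (hT : T = U + P) {k : H →L[ℂ] H}
    (hmem : k ∈ closure ((Algebra.adjoin ℂ ({T} : Set (H →L[ℂ] H)) :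
      Subalgebra ℂ (H →L[ℂ] H)) : Set (H →L[ℂ] H)))
    (hk : IsCompactOperator ⇑k) : k (b 0) = 0 := by
  have claim1 : ∀ m : ℤ, m < 0 → ⟪b m, k (b 0)⟫ = 0 := by
    intro m hm
    refine norm_le_of_forall_eps (fun ε hε => ?_)
    obtain ⟨a, haA, hdist⟩ := Metric.mem_closure_iff.mp hmem ε hε
    rw [dist_eq_norm] at hdist
    obtain ⟨N, c, rfl⟩ := adjoin_repr T haA
    have hz := poly_entry_zero_neg b U P T hU hP hT N c m hm
    have h1 : ⟪b m, k (b 0)⟫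
        = ⟪b m, (k - ∑ i ∈ Finset.range N, c i • T ^ i) (b 0)⟫ := by
      rw [ContinuousLinearMap.sub_apply, inner_sub_right, hz, sub_zero]
    rw [h1]
    calc ‖⟪b m, (k - ∑ i ∈ Finset.range N, c i • T ^ i) (b 0)⟫‖
        ≤ ‖(k - ∑ i ∈ Finset.range N, c i • T ^ i) (b 0)‖ := inner_b_le b m _
      _ ≤ ‖k - ∑ i ∈ Finset.range N, c i • T ^ i‖ * ‖b 0‖ :=
          ContinuousLinearMap.le_opNorm _ _
      _ ≤ ε := by rw [norm_b b 0, mul_one]; exact le_of_lt hdist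
  have claim2 : ∀ m : ℕ, ⟪b (m : ℤ), k (b 0)⟫ = ⟪b ((m : ℤ) + 1), k (b 0)⟫ := by
    intro m
    have hz : ∀ ε : ℝ, 0 < ε → ‖⟪b (m : ℤ), k (b 0)⟫ - ⟪b ((m : ℤ) + 1), k (b 0)⟫‖ ≤ 4 * ε := by
      intro ε hε
      obtain ⟨a, haA, hdist⟩ := Metric.mem_closure_iff.mp hmem ε hε
      rw [dist_eq_norm] at hdist
      obtain ⟨N, c, rfl⟩ := adjoin_repr T haA
      set a := ∑ i ∈ Finset.range N, c i • T ^ i with ha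
      obtain ⟨j, hjN, hjcol⟩ : ∃ j : ℕ, N ≤ j + 1 ∧ ‖k (b (-(j : ℤ) - 1))‖ ≤ ε := by
        have h1 := (compact_column_tendsto b hk (fun j : ℕ => -(j : ℤ) - 1)
          neg_seq_tendsto).eventually (gt_mem_nhds hε)
        have h2 : ∀ᶠ j : ℕ in atTop, N ≤ j + 1 := Filter.eventually_atTop.mpr ⟨N, fun j hj => by omega⟩
        obtain ⟨j, hj1, hj2⟩ := (h2.and h1).exists
        exact ⟨j, hj1, le_of_lt hj2⟩
      -- coefficient bound
      have hcoef : ‖(if m < N then c m else 0 : ℂ)‖ ≤ 2 * ε := by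
        rw [← poly_entry_neg b U P T hU hP hT N c j hjN m]
        calc ‖⟪b ((-(j : ℤ) - 1) + m), a (b (-(j : ℤ) - 1))⟫‖
            ≤ ‖a (b (-(j : ℤ) - 1))‖ := inner_b_le b _ _
          _ ≤ ‖(a - k) (b (-(j : ℤ) - 1))‖ + ‖k (b (-(j : ℤ) - 1))‖ := by
              have : a (b (-(j : ℤ) - 1))
                  = (a - k) (b (-(j : ℤ) - 1)) + k (b (-(j : ℤ) - 1)) := by
                rw [ContinuousLinearMap.sub_apply]; abel
              rw [this]; exact norm_add_le _ _
          _ ≤ ε + ε := by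
              refine add_le_add ?_ hjcol
              calc ‖(a - k) (b (-(j : ℤ) - 1))‖ ≤ ‖a - k‖ * ‖b (-(j : ℤ) - 1)‖ :=
                    ContinuousLinearMap.le_opNorm _ _
                _ ≤ ε := by
                    rw [norm_b, mul_one, norm_sub_rev]; exact le_of_lt hdist
          _ = 2 * ε := by ring
      -- difference
      have hdiff : ⟪b (m : ℤ), k (b 0)⟫ - ⟪b ((m : ℤ) + 1), k (b 0)⟫
          = (⟪b (m : ℤ), (k - a) (b 0)⟫ - ⟪b ((m : ℤ) + 1), (k - a) (b 0)⟫)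
            + (if m < N then c m else 0) := by
        rw [← poly_diff_entry b U P T hU hP hT N c m]
        simp only [ContinuousLinearMap.sub_apply, inner_sub_right]
        ring
      rw [hdiff]
      have hsub : ∀ m' : ℤ, ‖⟪b m', (k - a) (b 0)⟫‖ ≤ ε := by
        intro m'
        calc ‖⟪b m', (k - a) (b 0)⟫‖ ≤ ‖(k - a) (b 0)‖ := inner_b_le b _ _
          _ ≤ ‖k - a‖ * ‖b 0‖ := ContinuousLinearMap.le_opNorm _ _
          _ ≤ ε := by rw [norm_b, mul_one]; exact le_of_lt hdist
      calc ‖(⟪b (m : ℤ), (k - a) (b 0)⟫ - ⟪b ((m : ℤ) + 1), (k - a) (b 0)⟫)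
            + (if m < N then c m else 0)‖
          ≤ ‖⟪b (m : ℤ), (k - a) (b 0)⟫ - ⟪b ((m : ℤ) + 1), (k - a) (b 0)⟫‖
            + ‖(if m < N then c m else 0 : ℂ)‖ := norm_add_le _ _
        _ ≤ (‖⟪b (m : ℤ), (k - a) (b 0)⟫‖ + ‖⟪b ((m : ℤ) + 1), (k - a) (b 0)⟫‖)
            + 2 * ε := add_le_add (norm_sub_le _ _) hcoef
        _ ≤ (ε + ε) + 2 * ε := by
            exact add_le_add (add_le_add (hsub _) (hsub _)) le_rfl
        _ = 4 * ε := by ring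
    have : ⟪b (m : ℤ), k (b 0)⟫ - ⟪b ((m : ℤ) + 1), k (b 0)⟫ = 0 := by
      refine norm_le_of_forall_eps (fun ε hε => ?_)
      have := hz (ε / 4) (by positivity)
      linarith
    exact sub_eq_zero.mp this
  have claim3 : ∀ m : ℕ, ⟪b (m : ℤ), k (b 0)⟫ = ⟪b 0, k (b 0)⟫ := by
    intro m
    induction m with
    | zero => norm_num
    | succ m ih =>
      rw [← ih]
      have hcast : ((m + 1 : ℕ) : ℤ) = (m : ℤ) + 1 := by push_cast; ring
      rw [hcast]
      exact (claim2 m).symm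
  have claim4 : ⟪b 0, k (b 0)⟫ = 0 := by
    have h1 : Tendsto (fun j : ℕ => ⟪b ((j : ℤ)), k (b 0)⟫) atTop (𝓝 0) :=
      inner_coeff_tendsto b (k (b 0)) _ nat_seq_tendsto
    have h2 : (fun j : ℕ => ⟪b ((j : ℤ)), k (b 0)⟫) = fun _ => ⟪b 0, k (b 0)⟫ := by
      funext j; exact claim3 j
    rw [h2] at h1
    exact tendsto_nhds_unique tendsto_const_nhds h1
  have coeff_zero : ∀ m : ℤ, ⟪b m, k (b 0)⟫ = 0 := by
    intro m
    rcases lt_or_ge m 0 with h | h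
    · exact claim1 m h
    · have hm : m = ((m.toNat : ℕ) : ℤ) := (Int.toNat_of_nonneg h).symm
      rw [hm, claim3 m.toNat, claim4]
  have hself : ⟪k (b 0), k (b 0)⟫ = 0 := by
    have hs := b.tsum_inner_mul_inner (k (b 0)) (k (b 0))
    rw [← hs]
    have hterm : ∀ i : ℤ, ⟪k (b 0), b i⟫ * ⟪b i, k (b 0)⟫ = 0 := fun i => by
      rw [coeff_zero i, mul_zero]
    simp only [hterm, tsum_zero]
  rwa [inner_self_eq_zero] at hself

end Stmt16Aux

open Stmt16Aux in
theorem stmt16 {H : Type*} [NormedAddCommGroup H] [InnerProductSpace ℂ H] [CompleteSpace H]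
    (b : HilbertBasis ℤ ℂ H) (U : H →L[ℂ] H)
    (hU : ∀ n : ℤ, U (b n) = b (n + 1))
    (hU1 : U ∘L ContinuousLinearMap.adjoint U = 1)
    (hU2 : ContinuousLinearMap.adjoint U ∘L U = 1)
    (P : H →L[ℂ] H) (hP : P = (innerSL ℂ (b 0)).smulRight (b 0))
    (T : H →L[ℂ] H) (hT : T = U + P) :
    (∀ n : ℕ, 1 ≤ n → Real.sqrt n ≤ ‖T ^ n‖) ∧
    (∀ n : ℕ, 1 ≤ n →
      Metric.infDist (T ^ n) {K : H →L[ℂ] H | IsCompactOperator ⇑K} = 1) ∧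
    (¬ ∃ c : ℝ, 0 < c ∧ ∀ x ∈ Algebra.adjoin ℂ ({T} : Set (H →L[ℂ] H)),
      c * ‖x‖ ≤ Metric.infDist x {K : H →L[ℂ] H | IsCompactOperator ⇑K}) ∧
    ¬ IsClosed {x : H →L[ℂ] H |
        ∃ a ∈ (Algebra.adjoin ℂ ({T} : Set (H →L[ℂ] H))).topologicalClosure,
        ∃ k : H →L[ℂ] H, IsCompactOperator ⇑k ∧ x = a + k} := by
  have hTn0 : ∀ n : ℕ, ‖(T ^ n) (b 0)‖ = Real.sqrt (n + 1) := by
    intro n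
    rw [Tpow_zero b U P T hU hP hT n, norm_sum_b_nat b (n + 1)]
    norm_num
  have part1 : ∀ n : ℕ, 1 ≤ n → Real.sqrt n ≤ ‖T ^ n‖ := by
    intro n _
    calc Real.sqrt n ≤ Real.sqrt (n + 1) := Real.sqrt_le_sqrt (by linarith)
      _ = ‖(T ^ n) (b 0)‖ := (hTn0 n).symm
      _ ≤ ‖T ^ n‖ * ‖b 0‖ := ContinuousLinearMap.le_opNorm _ _
      _ = ‖T ^ n‖ := by rw [norm_b, mul_one]
  have part2 : ∀ n : ℕ, 1 ≤ n →
      Metric.infDist (T ^ n) {K : H →L[ℂ] H | IsCompactOperator ⇑K} = 1 := by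
    intro n _
    have hne : Set.Nonempty {K : H →L[ℂ] H | IsCompactOperator ⇑K} :=
      ⟨0, by simpa using (isCompactOperator_zero : IsCompactOperator (fun _ : H => (0 : H)))⟩
    refine le_antisymm ?_ ?_
    · have hmem : (T ^ n - U ^ n) ∈ {K : H →L[ℂ] H | IsCompactOperator ⇑K} :=
        TU_compact b U P T hU hP hT n
      calc Metric.infDist (T ^ n) {K : H →L[ℂ] H | IsCompactOperator ⇑K}
          ≤ dist (T ^ n) (T ^ n - U ^ n) := Metric.infDist_le_dist_of_mem hmem
        _ = ‖(U ^ n : H →L[ℂ] H)‖ := by rw [dist_eq_norm]; congr 1; abel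
        _ ≤ 1 := Upow_opNorm U hU2 n
    · by_contra hlt
      push_neg at hlt
      obtain ⟨k, hk, hdk⟩ := (Metric.infDist_lt_iff hne).mp hlt
      rw [dist_eq_norm] at hdk
      have hk' : IsCompactOperator ⇑(k - (T ^ n - U ^ n)) := by
        rw [ContinuousLinearMap.coe_sub']
        exact hk.sub (TU_compact b U P T hU hP hT n)
      set ε : ℝ := 1 - ‖T ^ n - k‖ with hε
      have hεpos : 0 < ε := by rw [hε]; linarith
      obtain ⟨j, hj⟩ :=
        ((compact_column_tendsto b hk' (fun j : ℕ => -(j : ℤ) - 1)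
          neg_seq_tendsto).eventually (gt_mem_nhds hεpos)).exists
      have h1 : (T ^ n - k) (b (-(j : ℤ) - 1))
          = (U ^ n) (b (-(j : ℤ) - 1)) - (k - (T ^ n - U ^ n)) (b (-(j : ℤ) - 1)) := by
        simp only [ContinuousLinearMap.sub_apply]; abel
      have h2 : ‖(U ^ n) (b (-(j : ℤ) - 1))‖ = 1 := by
        rw [Upow_apply b U hU n, norm_b]
      have h3 : (1 : ℝ) < ‖(T ^ n - k) (b (-(j : ℤ) - 1))‖ + ε := by
        have h4 := norm_sub_le ((T ^ n - k) (b (-(j : ℤ) - 1)))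
          (-((k - (T ^ n - U ^ n)) (b (-(j : ℤ) - 1))))
        have h5 : (U ^ n) (b (-(j : ℤ) - 1)) = (T ^ n - k) (b (-(j : ℤ) - 1))
            - (-((k - (T ^ n - U ^ n)) (b (-(j : ℤ) - 1)))) := by
          rw [h1]; abel
        have h6 : ‖(U ^ n) (b (-(j : ℤ) - 1))‖
            < ‖(T ^ n - k) (b (-(j : ℤ) - 1))‖ + ε := by
          rw [h5]
          refine lt_of_le_of_lt (norm_sub_le _ _) ?_
          rw [norm_neg]
          gcongr
        rw [h2] at h6; exact h6
      have h7 : ‖(T ^ n - k) (b (-(j : ℤ) - 1))‖ ≤ ‖T ^ n - k‖ := by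
        calc ‖(T ^ n - k) (b (-(j : ℤ) - 1))‖ ≤ ‖T ^ n - k‖ * ‖b (-(j : ℤ) - 1)‖ :=
            ContinuousLinearMap.le_opNorm _ _
          _ = ‖T ^ n - k‖ := by rw [norm_b, mul_one]
      rw [hε] at h3
      linarith
  have part3 : ¬ ∃ c : ℝ, 0 < c ∧ ∀ x ∈ Algebra.adjoin ℂ ({T} : Set (H →L[ℂ] H)),
      c * ‖x‖ ≤ Metric.infDist x {K : H →L[ℂ] H | IsCompactOperator ⇑K} := by
    rintro ⟨c, hc, hbd⟩
    set n : ℕ := ⌈(1 / c) ^ 2⌉₊ + 1 with hn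
    have hn1 : 1 ≤ n := Nat.le_add_left 1 _
    have hTnA : (T ^ n) ∈ Algebra.adjoin ℂ ({T} : Set (H →L[ℂ] H)) :=
      pow_mem (Algebra.subset_adjoin (Set.mem_singleton T)) n
    have h1 := hbd (T ^ n) hTnA
    rw [part2 n hn1] at h1
    have h2 : Real.sqrt n ≤ ‖T ^ n‖ := part1 n hn1
    have h3 : (1 / c) ^ 2 < (n : ℝ) := by
      have h4 := Nat.le_ceil ((1 / c) ^ 2)
      have h5 : ((⌈(1 / c) ^ 2⌉₊ : ℕ) : ℝ) < (n : ℝ) := by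
        rw [hn]; push_cast; linarith
      linarith
    have h4 : 1 / c < Real.sqrt n := (Real.lt_sqrt (by positivity)).mpr h3
    have h5 : 1 < c * Real.sqrt n := by
      have h6 := (div_lt_iff₀ hc).mp h4
      linarith [mul_comm (Real.sqrt n) c]
    have h6 : c * Real.sqrt n ≤ c * ‖T ^ n‖ := by gcongr
    linarith
  refine ⟨part1, part2, part3, ?_⟩
  intro hcl
  classical
  set Abar := (Algebra.adjoin ℂ ({T} : Set (H →L[ℂ] H))).topologicalClosure with hAbar
  set Asub : Submodule ℂ (H →L[ℂ] H) := Subalgebra.toSubmodule Abar with hAsub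
  set Ksub : Submodule ℂ (H →L[ℂ] H) := compactOperator (RingHom.id ℂ) H H with hKsub
  have hKclosed : IsClosed (Ksub : Set (H →L[ℂ] H)) := isClosed_setOf_isCompactOperator
  have hAclosed : IsClosed (Asub : Set (H →L[ℂ] H)) :=
    (Algebra.adjoin ℂ ({T} : Set (H →L[ℂ] H))).isClosed_topologicalClosure
  set Ssub : Submodule ℂ (H →L[ℂ] H) := Asub ⊔ Ksub with hSsub
  have hSset : (Ssub : Set (H →L[ℂ] H)) = {x : H →L[ℂ] H |
      ∃ a ∈ Abar, ∃ k : H →L[ℂ] H, IsCompactOperator ⇑k ∧ x = a + k} := by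
    ext x
    simp only [SetLike.mem_coe, hSsub, Submodule.mem_sup, Set.mem_setOf_eq]
    constructor
    · rintro ⟨y, hy, z, hz, rfl⟩
      exact ⟨y, hy, z, hz, rfl⟩
    · rintro ⟨a, ha, k, hk, rfl⟩
      exact ⟨a, ha, k, hk, rfl⟩
  have hScl : IsClosed (Ssub : Set (H →L[ℂ] H)) := by rw [hSset]; exact hcl
  haveI : CompleteSpace Asub := hAclosed.completeSpace_coe
  haveI : CompleteSpace Ksub := hKclosed.completeSpace_coe
  haveI : CompleteSpace Ssub := hScl.completeSpace_coe
  let Φlin : (Asub × Ksub) →ₗ[ℂ] Ssub :=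
    { toFun := fun p => ⟨(p.1 : H →L[ℂ] H) + (p.2 : H →L[ℂ] H),
        Submodule.add_mem_sup p.1.2 p.2.2⟩
      map_add' := fun p q => by
        apply Subtype.ext
        simp only [Submodule.coe_add, Prod.fst_add, Prod.snd_add]
        abel
      map_smul' := fun c p => by
        apply Subtype.ext
        simp only [Submodule.coe_smul, Prod.smul_fst, Prod.smul_snd, RingHom.id_apply, smul_add] }
  let Φ : (Asub × Ksub) →L[ℂ] Ssub := Φlin.mkContinuous 2 (fun p => by
    have h1 : ‖Φlin p‖ = ‖(p.1 : H →L[ℂ] H) + (p.2 : H →L[ℂ] H)‖ := rfl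
    rw [h1]
    calc ‖(p.1 : H →L[ℂ] H) + (p.2 : H →L[ℂ] H)‖
        ≤ ‖(p.1 : H →L[ℂ] H)‖ + ‖(p.2 : H →L[ℂ] H)‖ := norm_add_le _ _
      _ ≤ ‖p‖ + ‖p‖ := add_le_add (norm_fst_le p) (norm_snd_le p)
      _ = 2 * ‖p‖ := by ring)
  have hsurj : Function.Surjective Φ := by
    rintro ⟨y, hy⟩
    obtain ⟨a, ha, k, hk, hsum⟩ := Submodule.mem_sup.mp hy
    exact ⟨(⟨a, ha⟩, ⟨k, hk⟩), Subtype.ext hsum⟩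
  obtain ⟨C, hC0, hC⟩ := ContinuousLinearMap.exists_preimage_norm_le Φ hsurj
  set n : ℕ := ⌈C ^ 2⌉₊ with hn
  have hTmem : T ∈ Abar :=
    (Algebra.adjoin ℂ ({T} : Set (H →L[ℂ] H))).le_topologicalClosure
      (Algebra.subset_adjoin (Set.mem_singleton T))
  have hTnA : (T ^ n) ∈ Asub := pow_mem hTmem n
  have hUnS : (U ^ n : H →L[ℂ] H) ∈ Ssub := by
    have h1 : (T ^ n : H →L[ℂ] H) ∈ Ssub := Submodule.mem_sup_left hTnA
    have h2 : ((U ^ n - T ^ n : H →L[ℂ] H)) ∈ Ssub := by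
      apply Submodule.mem_sup_right
      show IsCompactOperator ⇑(U ^ n - T ^ n : H →L[ℂ] H)
      have h3 := (TU_compact b U P T hU hP hT n).neg
      have h4 : ⇑(U ^ n - T ^ n : H →L[ℂ] H) = -⇑(T ^ n - U ^ n : H →L[ℂ] H) := by
        rw [← ContinuousLinearMap.coe_neg', neg_sub]
      rw [h4]; exact h3
    have h5 := Submodule.add_mem _ h1 h2
    have h6 : (T ^ n : H →L[ℂ] H) + (U ^ n - T ^ n) = U ^ n := by abel
    rwa [h6] at h5
  obtain ⟨⟨pa, pk⟩, hΦeq, hΦnorm⟩ := hC ⟨U ^ n, hUnS⟩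
  have hsum : (pa : H →L[ℂ] H) + (pk : H →L[ℂ] H) = U ^ n := congrArg Subtype.val hΦeq
  have hpa_norm : ‖(pa : H →L[ℂ] H)‖ ≤ C := by
    have h2 : ‖(⟨U ^ n, hUnS⟩ : Ssub)‖ = ‖(U ^ n : H →L[ℂ] H)‖ := rfl
    calc ‖(pa : H →L[ℂ] H)‖ = ‖pa‖ := rfl
      _ ≤ ‖((pa, pk) : Asub × Ksub)‖ := by
          rw [Prod.norm_def]
          exact le_max_left _ _
      _ ≤ C * ‖(⟨U ^ n, hUnS⟩ : Ssub)‖ := hΦnorm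
      _ ≤ C * 1 := by
          rw [h2]; exact mul_le_mul_of_nonneg_left (Upow_opNorm U hU2 n) (le_of_lt hC0)
      _ = C := mul_one C
  set k' : H →L[ℂ] H := T ^ n - (pa : H →L[ℂ] H) with hk'
  have hk'A : k' ∈ closure ((Algebra.adjoin ℂ ({T} : Set (H →L[ℂ] H)) :
      Subalgebra ℂ (H →L[ℂ] H)) : Set (H →L[ℂ] H)) := by
    have h1 : k' ∈ Asub := Submodule.sub_mem _ hTnA pa.2
    exact h1
  have hk'c : IsCompactOperator ⇑k' := by
    have h1 : k' = (T ^ n - U ^ n) + (pk : H →L[ℂ] H) := by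
      rw [hk', ← hsum]; abel
    rw [h1, ContinuousLinearMap.coe_add']
    exact (TU_compact b U P T hU hP hT n).add pk.2
  have hker := key_kernel b U P T hU hP hT hk'A hk'c
  have h1 : (pa : H →L[ℂ] H) (b 0) = (T ^ n) (b 0) := by
    have h2 : (T ^ n) (b 0) - (pa : H →L[ℂ] H) (b 0) = 0 := by
      rw [← ContinuousLinearMap.sub_apply]
      exact hker
    have := sub_eq_zero.mp h2
    exact this.symm
  have h2 : Real.sqrt (n + 1) ≤ C := by
    calc Real.sqrt (n + 1) = ‖(T ^ n) (b 0)‖ := (hTn0 n).symm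
      _ = ‖(pa : H →L[ℂ] H) (b 0)‖ := by rw [h1]
      _ ≤ ‖(pa : H →L[ℂ] H)‖ * ‖b 0‖ := ContinuousLinearMap.le_opNorm _ _
      _ ≤ C := by rw [norm_b, mul_one]; exact hpa_norm
  have h3 : C < Real.sqrt (n + 1) := by
    have h4 : C ^ 2 < ((n : ℝ) + 1) := by
      have h5 := Nat.le_ceil (C ^ 2)
      rw [hn]; push_cast
      push_cast at h5
      linarith
    exact (Real.lt_sqrt (le_of_lt hC0)).mpr h4
  linarith
end
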